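/- Let $P$ be a row-stochastic $n\times n$ matrix, $\rho$ a probability vector, $\gamma\in(0,1)$, $\tilde P = \gamma P + (1-\gamma)\mathbf{1}\rho^T$, and $d$ a stationary distribution of $\tilde P$ with diagonal matrix $D$. Let $\Phi\in\mathbb{R}^{n\times m}$ have full column rank and suppose $d_i>0$ for all $i$. Define $G = \Phi^T D (I_n - \gamma P)\Phi$. Then there exists $\kappa>0$ such that $\omega^T G\,\omega \ge \kappa\|\omega\|^2$ for all $\omega\in\mathbb{R}^m$; in particular $G$ is invertible. -/

import Mathlib

open Matrix BigOperators

lemma phi_lower {n m : ℕ} (Φ : Matrix (Fin n) (Fin m) ℝ)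
    (hΦ : ∀ ω : Fin m → ℝ, Φ.mulVec ω = 0 → ω = 0) :
    ∃ c > (0:ℝ), ∀ ω : Fin m → ℝ, c * ∑ i, ω i ^ 2 ≤ ∑ i, (Φ.mulVec ω i) ^ 2 := by
  set f : EuclideanSpace ℝ (Fin m) →ₗ[ℝ] EuclideanSpace ℝ (Fin n) := Matrix.toEuclideanLin Φ with hf
  have hker : LinearMap.ker f = ⊥ := by
    rw [LinearMap.ker_eq_bot]
    intro a b hab
    have h0 : f (a - b) = 0 := by rw [map_sub, hab, sub_self]
    have h1 : Φ.mulVec ((WithLp.equiv 2 (Fin m → ℝ)) (a - b)) = 0 := by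
      have := congrArg (WithLp.equiv 2 (Fin n → ℝ)) h0
      simpa [hf, Matrix.toEuclideanLin_apply] using this
    have h2 := hΦ _ h1
    have h3 : a - b = 0 := by
      have : (WithLp.equiv 2 (Fin m → ℝ)) (a - b) = (WithLp.equiv 2 (Fin m → ℝ)) 0 := by
        simpa using h2
      exact (WithLp.equiv 2 (Fin m → ℝ)).injective this
    exact sub_eq_zero.mp h3
  obtain ⟨K, hK, hAL⟩ := f.exists_antilipschitzWith hker
  refine ⟨((K:ℝ) ^ 2)⁻¹, by positivity, fun ω => ?_⟩
  set v : EuclideanSpace ℝ (Fin m) := (WithLp.equiv 2 (Fin m → ℝ)).symm ω with hv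
  have hfv : (WithLp.equiv 2 (Fin n → ℝ)) (f v) = Φ.mulVec ω := by
    simp [hf, hv, Matrix.toEuclideanLin_apply]
  have hnv : ‖v‖ ^ 2 = ∑ i, ω i ^ 2 := by
    rw [EuclideanSpace.norm_eq, Real.sq_sqrt (by positivity)]
    refine Finset.sum_congr rfl fun i _ => ?_
    simp [hv, Real.norm_eq_abs, sq_abs]
  have hnfv : ‖f v‖ ^ 2 = ∑ i, (Φ.mulVec ω i) ^ 2 := by
    rw [EuclideanSpace.norm_eq, Real.sq_sqrt (by positivity)]
    refine Finset.sum_congr rfl fun i _ => ?_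
    have : (f v) i = Φ.mulVec ω i := congrFun hfv i
    rw [this]
    simp [Real.norm_eq_abs, sq_abs]
  have hle : ‖v‖ ≤ (K:ℝ) * ‖f v‖ := by
    have := hAL.le_mul_dist v 0
    simpa [dist_eq_norm] using this
  have hKpos : (0:ℝ) < (K:ℝ) := hK
  have h2 : ‖v‖ ^ 2 ≤ (K:ℝ) ^ 2 * ‖f v‖ ^ 2 := by nlinarith [norm_nonneg v, norm_nonneg (f v)]
  rw [← hnv, ← hnfv]
  rw [inv_mul_le_iff₀ (by positivity)]
  linarith [h2]

theorem stmt1 {n m : ℕ} (P : Matrix (Fin n) (Fin n) ℝ) (ρ d : Fin n → ℝ) (γ : ℝ)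
    (Φ : Matrix (Fin n) (Fin m) ℝ)
    (hγ : γ ∈ Set.Ioo (0:ℝ) 1)
    (hPnn : ∀ i j, 0 ≤ P i j) (hProw : ∀ i, ∑ j, P i j = 1)
    (hρnn : ∀ i, 0 ≤ ρ i) (hρsum : ∑ i, ρ i = 1)
    (hdnn : ∀ i, 0 ≤ d i) (hdsum : ∑ i, d i = 1)
    (hstat : Matrix.vecMul d (γ • P + (1-γ) • Matrix.of (fun _ j => ρ j)) = d)
    (hdpos : ∀ i, 0 < d i)
    (hΦ : ∀ ω : Fin m → ℝ, Φ.mulVec ω = 0 → ω = 0) :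
    (∃ κ > (0:ℝ), ∀ ω : Fin m → ℝ,
        κ * ∑ i, ω i ^ 2
          ≤ ω ⬝ᵥ (Φᵀ * Matrix.diagonal d * (1 - γ • P) * Φ).mulVec ω)
    ∧ IsUnit (Φᵀ * Matrix.diagonal d * (1 - γ • P) * Φ) := by
  obtain ⟨hγ0, hγ1⟩ := hγ
  set G := Φᵀ * Matrix.diagonal d * (1 - γ • P) * Φ with hG
  have main : ∃ κ > (0:ℝ), ∀ ω : Fin m → ℝ, κ * ∑ i, ω i ^ 2 ≤ ω ⬝ᵥ G.mulVec ω := by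
    rcases Nat.eq_zero_or_pos n with hn | hn
    · -- n = 0 forces m = 0
      subst hn
      have hm : m = 0 := by
        by_contra hm
        have h0 : Φ.mulVec (fun _ => 1) = 0 := by
          ext i
          exact i.elim0
        have := congrFun (hΦ _ h0) ⟨0, Nat.pos_of_ne_zero hm⟩
        norm_num at this
      subst hm
      exact ⟨1, one_pos, fun ω => by simp [dotProduct]⟩
    · set s := Real.sqrt γ with hsdef
      have hs0 : 0 < s := Real.sqrt_pos.mpr hγ0
      have hs2 : s ^ 2 = γ := Real.sq_sqrt hγ0.le
      have hs1 : s < 1 := by nlinarith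
      -- stationarity consequence
      have hstat' : ∀ j, γ * ∑ i, d i * P i j ≤ d j := by
        intro j
        have h := congrFun hstat j
        have h' : ∑ i, d i * (γ * P i j + (1-γ) * ρ j) = d j := by
          simpa [Matrix.vecMul, dotProduct, Matrix.of_apply] using h
        have hsplit : ∑ i, d i * (γ * P i j + (1-γ) * ρ j)
            = γ * ∑ i, d i * P i j + (1-γ) * ρ j * ∑ i, d i := by
          rw [Finset.mul_sum, Finset.mul_sum, ← Finset.sum_add_distrib]
          exact Finset.sum_congr rfl fun i _ => by ring
        rw [hsplit, hdsum] at h'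
        nlinarith [mul_nonneg (by linarith : (0:ℝ) ≤ 1 - γ) (hρnn j)]
      -- quadratic form lower bound on full space
      have quad : ∀ x : Fin n → ℝ,
          (1 - s) * ∑ i, d i * x i ^ 2 ≤ x ⬝ᵥ (Matrix.diagonal d * (1 - γ • P)).mulVec x := by
        intro x
        have expand : x ⬝ᵥ (Matrix.diagonal d * (1 - γ • P)).mulVec x
            = (∑ i, d i * x i ^ 2) - ∑ i, ∑ j, γ * (d i * P i j * (x i * x j)) := by
          have h1 : (1 - γ • P).mulVec x = x - γ • P.mulVec x := by
            rw [Matrix.sub_mulVec, Matrix.one_mulVec, Matrix.smul_mulVec]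
          rw [← Matrix.mulVec_mulVec, h1]
          simp only [dotProduct, Matrix.mulVec_diagonal, Pi.sub_apply, Pi.smul_apply,
            smul_eq_mul]
          simp only [Matrix.mulVec, dotProduct]
          rw [← Finset.sum_sub_distrib]
          refine Finset.sum_congr rfl fun i _ => ?_
          have h2 : ∑ j, γ * (d i * P i j * (x i * x j))
              = x i * (d i * (γ * ∑ j, P i j * x j)) := by
            simp only [Finset.mul_sum]
            exact Finset.sum_congr rfl fun j _ => by ring
          rw [h2]
          ring
        rw [expand]
        have cross : ∑ i, ∑ j, γ * (d i * P i j * (x i * x j)) ≤ s * ∑ i, d i * x i ^ 2 := by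
          have step1 : ∑ i, ∑ j, γ * (d i * P i j * (x i * x j))
              ≤ ∑ i, ∑ j, ((s/2) * (d i * P i j * x i ^ 2)
                  + (s/2) * (d i * P i j * (γ * x j ^ 2))) := by
            refine Finset.sum_le_sum fun i _ => Finset.sum_le_sum fun j _ => ?_
            have h1 : (0:ℝ) ≤ d i * P i j := mul_nonneg (hdnn i) (hPnn i j)
            have hx : γ * (x i * x j) ≤ (s/2) * (x i ^ 2 + γ * x j ^ 2) := by
              rw [← hs2]
              nlinarith [mul_nonneg hs0.le (sq_nonneg (x i - s * x j))]
            have hmul := mul_le_mul_of_nonneg_left hx h1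
            nlinarith [hmul]
          have hA : ∑ i, ∑ j, (s/2) * (d i * P i j * x i ^ 2)
              = (s/2) * ∑ i, d i * x i ^ 2 := by
            rw [Finset.mul_sum]
            refine Finset.sum_congr rfl fun i _ => ?_
            have : ∑ j, (s/2) * (d i * P i j * x i ^ 2)
                = ((s/2) * (d i * x i ^ 2)) * ∑ j, P i j := by
              rw [Finset.mul_sum]
              exact Finset.sum_congr rfl fun j _ => by ring
            rw [this, hProw i]
            ring
          have hB : ∑ i, ∑ j, (s/2) * (d i * P i j * (γ * x j ^ 2))
              ≤ (s/2) * ∑ j, d j * x j ^ 2 := by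
            rw [Finset.sum_comm, Finset.mul_sum]
            refine Finset.sum_le_sum fun j _ => ?_
            have heq : ∑ i, (s/2) * (d i * P i j * (γ * x j ^ 2))
                = (s/2) * ((γ * ∑ i, d i * P i j) * x j ^ 2) := by
              rw [Finset.mul_sum, Finset.sum_mul, Finset.mul_sum]
              exact Finset.sum_congr rfl fun i _ => by ring
            rw [heq]
            have h3 := mul_le_mul_of_nonneg_right (hstat' j) (sq_nonneg (x j))
            nlinarith [h3, hs0.le]
          calc ∑ i, ∑ j, γ * (d i * P i j * (x i * x j))
              ≤ ∑ i, ∑ j, ((s/2) * (d i * P i j * x i ^ 2)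
                  + (s/2) * (d i * P i j * (γ * x j ^ 2))) := step1
            _ = (∑ i, ∑ j, (s/2) * (d i * P i j * x i ^ 2))
                + ∑ i, ∑ j, (s/2) * (d i * P i j * (γ * x j ^ 2)) := by
                rw [← Finset.sum_add_distrib]
                exact Finset.sum_congr rfl fun i _ => by rw [← Finset.sum_add_distrib]
            _ ≤ (s/2) * ∑ i, d i * x i ^ 2 + (s/2) * ∑ j, d j * x j ^ 2 := by
                rw [hA]; exact add_le_add_right hB _
            _ = s * ∑ i, d i * x i ^ 2 := by ring
        linarith
      -- min of d
      have hne : (Finset.univ : Finset (Fin n)).Nonempty := ⟨⟨0, hn⟩, Finset.mem_univ _⟩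
      set dm := Finset.univ.inf' hne d with hdm
      have hdm_pos : 0 < dm := (Finset.lt_inf'_iff hne).mpr fun i _ => hdpos i
      have hdm_le : ∀ i, dm ≤ d i := fun i => Finset.inf'_le d (Finset.mem_univ i)
      obtain ⟨c, hc, hcb⟩ := phi_lower Φ hΦ
      have h1s : (0:ℝ) < 1 - s := by linarith
      refine ⟨(1 - s) * dm * c, by positivity, fun ω => ?_⟩
      set x := Φ.mulVec ω with hx
      have rw1 : ω ⬝ᵥ G.mulVec ω = x ⬝ᵥ (Matrix.diagonal d * (1 - γ • P)).mulVec x := by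
        rw [hG, show Φᵀ * Matrix.diagonal d * (1 - γ • P) * Φ
            = Φᵀ * ((Matrix.diagonal d * (1 - γ • P)) * Φ) by
          rw [Matrix.mul_assoc, Matrix.mul_assoc, Matrix.mul_assoc]]
        rw [← Matrix.mulVec_mulVec, dotProduct_mulVec, Matrix.vecMul_transpose,
          ← Matrix.mulVec_mulVec]
      have step2 : dm * ∑ i, x i ^ 2 ≤ ∑ i, d i * x i ^ 2 := by
        rw [Finset.mul_sum]
        exact Finset.sum_le_sum fun i _ =>
          mul_le_mul_of_nonneg_right (hdm_le i) (sq_nonneg _)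
      have step1 : c * ∑ i, ω i ^ 2 ≤ ∑ i, x i ^ 2 := hcb ω
      have hxnn : (0:ℝ) ≤ ∑ i, x i ^ 2 := Finset.sum_nonneg fun i _ => sq_nonneg _
      calc (1 - s) * dm * c * ∑ i, ω i ^ 2
          = (1 - s) * dm * (c * ∑ i, ω i ^ 2) := by ring
        _ ≤ (1 - s) * dm * ∑ i, x i ^ 2 := by
            exact mul_le_mul_of_nonneg_left step1 (mul_pos h1s hdm_pos).le
        _ = (1 - s) * (dm * ∑ i, x i ^ 2) := by ring
        _ ≤ (1 - s) * ∑ i, d i * x i ^ 2 := mul_le_mul_of_nonneg_left step2 h1s.le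
        _ ≤ x ⬝ᵥ (Matrix.diagonal d * (1 - γ • P)).mulVec x := quad x
        _ = ω ⬝ᵥ G.mulVec ω := rw1.symm
  refine ⟨main, ?_⟩
  obtain ⟨κ, hκ, hb⟩ := main
  rw [← Matrix.mulVec_injective_iff_isUnit]
  intro a b hab
  have h0 : G.mulVec (a - b) = 0 := by
    rw [Matrix.mulVec_sub]
    rw [show G.mulVec a = G.mulVec b from hab]
    simp
  have h1 := hb (a - b)
  rw [h0] at h1
  simp only [dotProduct_zero] at h1
  have hsum : ∑ i, (a - b) i ^ 2 ≤ 0 := by nlinarith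
  have hzero : ∀ i, (a - b) i = 0 := by
    intro i
    have h2 : ∑ i, (a - b) i ^ 2 = 0 :=
      le_antisymm hsum (Finset.sum_nonneg fun i _ => sq_nonneg _)
    have := (Finset.sum_eq_zero_iff_of_nonneg fun i _ => sq_nonneg ((a-b) i)).mp h2 i
      (Finset.mem_univ i)
    exact pow_eq_zero_iff (by norm_num) |>.mp this
  funext i
  have := hzero i
  simp only [Pi.sub_apply] at this
  linarith
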